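/- Let A and B be abelian groups, φ: A → B and ψ: B → A homomorphisms with ψ ∘ φ = multiplication by m on A and φ ∘ ψ = multiplication by m on B. Then the sequence 0 → ker φ → A[m] → ker ψ → B/φ(A) → A/mA → A/ψ(B) → 0 is exact, where A[m] → ker ψ is induced by φ and B/φ(A) → A/mA is induced by ψ. -/
import Mathlib


/-- For abelian groups `A`, `B` and homomorphisms `φ : A → B`, `ψ : B → A` with
`ψ ∘ φ = m` on `A` and `φ ∘ ψ = m` on `B`, the sequence
`0 → ker φ → A[m] → ker ψ → B/φ(A) → A/mA → A/ψ(B) → 0` is exact, where `A[m] → ker ψ` is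
induced by `φ` and `B/φ(A) → A/mA` is induced by `ψ`. -/
theorem stmt_4 (A B : Type*) [AddCommGroup A] [AddCommGroup B] (m : ℕ) (hm : 0 < m)
    (φ : A →+ B) (ψ : B →+ A)
    (hψφ : ∀ a : A, ψ (φ a) = m • a) (hφψ : ∀ b : B, φ (ψ b) = m • b)
    (Am : AddSubgroup A) (hAm : ∀ a : A, a ∈ Am ↔ m • a = 0)
    (mA : AddSubgroup A) (hmA : ∀ a : A, a ∈ mA ↔ ∃ x : A, m • x = a)
    (i : φ.ker → Am) (hi : ∀ x, (i x : A) = (x : A))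
    (f : Am → ψ.ker) (hf : ∀ x, (f x : B) = φ (x : A))
    (g : ψ.ker → B ⧸ φ.range) (hg : ∀ x, g x = QuotientAddGroup.mk (x : B))
    (h : B ⧸ φ.range → A ⧸ mA)
    (hh : ∀ b : B, h (QuotientAddGroup.mk b) = QuotientAddGroup.mk (ψ b))
    (k : A ⧸ mA → A ⧸ ψ.range)
    (hk : ∀ a : A, k (QuotientAddGroup.mk a) = QuotientAddGroup.mk a) :
    Function.Injective i ∧ Function.Exact i f ∧ Function.Exact f g ∧
      Function.Exact g h ∧ Function.Exact h k ∧ Function.Surjective k := by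

  refine ⟨?_, ?_, ?_, ?_, ?_, ?_⟩
  · -- injective i
    intro x y hxy
    apply Subtype.ext
    have : (i x : A) = (i y : A) := by rw [hxy]
    rwa [hi, hi] at this
  · -- exact i f
    intro x
    constructor
    · intro hx
      have hx' : φ (x : A) = 0 := by
        have : (f x : B) = ((0 : ψ.ker) : B) := by rw [hx]
        rwa [hf] at this
      refine ⟨⟨(x : A), hx'⟩, ?_⟩
      apply Subtype.ext
      rw [hi]
    · rintro ⟨z, rfl⟩
      apply Subtype.ext
      rw [hf, hi]
      exact z.2
  · -- exact f g
    intro y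
    constructor
    · intro hy
      rw [hg, QuotientAddGroup.eq_zero_iff] at hy
      obtain ⟨a, ha⟩ := hy
      have hmem : a ∈ Am := by
        rw [hAm]
        have := hψφ a
        rw [ha] at this
        rw [← this]
        exact y.2
      refine ⟨⟨a, hmem⟩, ?_⟩
      apply Subtype.ext
      rw [hf]
      exact ha
    · rintro ⟨z, rfl⟩
      rw [hg, QuotientAddGroup.eq_zero_iff, hf]
      exact ⟨(z : A), rfl⟩
  · -- exact g h
    intro q
    induction q using QuotientAddGroup.induction_on with
    | H b =>
      constructor
      · intro hb
        rw [hh, QuotientAddGroup.eq_zero_iff, hmA] at hb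
        obtain ⟨x, hx⟩ := hb
        have hker : ψ (b - φ x) = 0 := by
          rw [map_sub, hψφ, hx, sub_self]
        refine ⟨⟨b - φ x, hker⟩, ?_⟩
        rw [hg]
        show QuotientAddGroup.mk (b - φ x) = QuotientAddGroup.mk b
        rw [QuotientAddGroup.eq]
        exact ⟨x, by abel⟩
      · rintro ⟨z, hz⟩
        rw [← hz, hg, hh, QuotientAddGroup.eq_zero_iff, hmA, z.2]
        exact ⟨0, by simp⟩
  · -- exact h k
    intro q
    induction q using QuotientAddGroup.induction_on with
    | H a =>
      constructor
      · intro ha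
        rw [hk, QuotientAddGroup.eq_zero_iff] at ha
        obtain ⟨b, hb⟩ := ha
        exact ⟨QuotientAddGroup.mk b, by rw [hh, hb]⟩
      · rintro ⟨z, hz⟩
        induction z using QuotientAddGroup.induction_on with
        | H b =>
          rw [hh] at hz
          rw [← hz, hk, QuotientAddGroup.eq_zero_iff]
          exact ⟨b, rfl⟩
  · -- surjective k
    intro q
    induction q using QuotientAddGroup.induction_on with
    | H a => exact ⟨QuotientAddGroup.mk a, hk a⟩
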